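/- Let p ≥ 5 be prime and let ω be the Teichmüller character of Δ = (ℤ/pℤ)^×. Let θ = (1/p) Σ_{j=1}^{p-2} j·σ_j^{-1} be the Stickelberger element and 𝒥 = ℤΔ ∩ θ·ℤΔ the Stickelberger ideal. Then ω^{-1}(𝒥_p) = B_{1,ω}·ℤ_p where 𝒥_p is the p-completion of 𝒥, and B_{1,ω} ≡ 1/12 (mod p); in particular ω^{-1}(𝒥_p) = ℤ_p. -/

import Mathlib

open scoped Padic

section

variable (p : ℕ) [Fact p.Prime]

/-- The Stickelberger element `θ = (1/p) Σ_{j=1}^{p-2} j·σ_j⁻¹` in `ℚ[Δ]`,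
`Δ = (ℤ/pℤ)ˣ`. -/
noncomputable def stickelbergerElt : MonoidAlgebra ℚ (ZMod p)ˣ :=
  (p : ℚ)⁻¹ • ∑ δ : (ZMod p)ˣ,
    (if ((δ : ZMod p)).val ≤ p - 2 then ((((δ : ZMod p)).val : ℚ)) else 0) •
      MonoidAlgebra.single δ⁻¹ (1 : ℚ)

/-- The inclusion `ℤ[Δ] → ℚ[Δ]` on coefficients. -/
noncomputable def intToRatGroupRing (z : MonoidAlgebra ℤ (ZMod p)ˣ) :
    MonoidAlgebra ℚ (ZMod p)ˣ :=
  MonoidAlgebra.ofCoeff (Finsupp.mapRange (Int.cast : ℤ → ℚ) Int.cast_zero z.coeff)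

/-- Membership in the Stickelberger ideal `𝒥 = ℤΔ ∩ θ·ℤΔ` of `ℤ[Δ]`. -/
noncomputable def memStickelbergerIdeal (z : MonoidAlgebra ℤ (ZMod p)ˣ) : Prop :=
  ∃ w : MonoidAlgebra ℤ (ZMod p)ˣ,
    intToRatGroupRing p z = stickelbergerElt p * intToRatGroupRing p w

/-- Evaluation `ω⁻¹ : ℤ[Δ] → ℤ_p` of the group ring at the inverse of the
Teichmüller character `ω`. -/
noncomputable def omegaInvEval (ω : (ZMod p)ˣ →* ℤ_[p]ˣ) :
    MonoidAlgebra ℤ (ZMod p)ˣ →ₐ[ℤ] ℤ_[p] :=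
  MonoidAlgebra.lift ℤ ℤ_[p] (ZMod p)ˣ
    ((Units.coeHom ℤ_[p]).comp (invMonoidHom.comp ω))

namespace Stmt14Aux

lemma toZMod_zero_iff (x : ℤ_[p]) :
    PadicInt.toZMod x = 0 ↔ (p : ℤ_[p]) ∣ x := by
  rw [← RingHom.mem_ker, PadicInt.ker_toZMod, PadicInt.maximalIdeal_eq_span_p,
    Ideal.mem_span_singleton]

lemma isUnit_of_toZMod_ne_zero {x : ℤ_[p]} (h : PadicInt.toZMod x ≠ 0) : IsUnit x := by
  by_contra hu
  apply h
  rw [← RingHom.mem_ker, PadicInt.ker_toZMod]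
  exact hu

lemma pow_expand {R : Type*} [CommRing R] (x y : R) (n : ℕ) :
    ∃ c : R, (x + y) ^ (n + 1) = x ^ (n + 1) + (n + 1) * x ^ n * y + y ^ 2 * c := by
  induction n with
  | zero => exact ⟨0, by ring⟩
  | succ n ih =>
    obtain ⟨c, hc⟩ := ih
    refine ⟨x * c + (n + 1) * x ^ n + y * c, ?_⟩
    rw [pow_succ, hc]
    push_cast
    ring

lemma sum_units_val {M : Type*} [AddCommMonoid M] (f : ℕ → M) :
    ∑ δ : (ZMod p)ˣ, f ((δ : ZMod p)).val = ∑ a ∈ Finset.Ico 1 p, f a := by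
  have hp : p.Prime := Fact.out
  refine Finset.sum_bij' (fun δ _ => ((δ : ZMod p)).val)
    (fun a ha => ZMod.unitOfCoprime a ?_) ?_ ?_ ?_ ?_ ?_
  · rw [Finset.mem_Ico] at ha
    exact Nat.Coprime.symm ((Nat.Prime.coprime_iff_not_dvd hp).mpr
      (Nat.not_dvd_of_pos_of_lt ha.1 ha.2))
  · intro δ _
    rw [Finset.mem_Ico]
    constructor
    · exact Nat.one_le_iff_ne_zero.mpr fun h => δ.ne_zero (by
        rwa [ZMod.val_eq_zero] at h)
    · exact ZMod.val_lt _
  · intro a _; exact Finset.mem_univ _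
  · intro δ _
    apply Units.ext
    show ((ZMod.unitOfCoprime _ _ : (ZMod p)ˣ) : ZMod p) = _
    rw [ZMod.coe_unitOfCoprime, ZMod.natCast_val, ZMod.cast_id]
  · intro a ha
    rw [Finset.mem_Ico] at ha
    show ((ZMod.unitOfCoprime a _ : (ZMod p)ˣ) : ZMod p).val = a
    rw [ZMod.coe_unitOfCoprime, ZMod.val_cast_of_lt ha.2]
  · intro δ _; rfl

lemma sum_units_pow (i : ℕ) (h : ¬ (p - 1) ∣ i) :
    ∑ δ : (ZMod p)ˣ, ((δ : ZMod p)) ^ i = 0 := by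
  classical
  have := FiniteField.sum_pow_units (ZMod p) i
  rw [ZMod.card] at this
  rw [this, if_neg h]

lemma neg_one_eq_cast (hp5 : 5 ≤ p) : (-1 : ZMod p) = ((p - 1 : ℕ) : ZMod p) := by
  have h1 : (1:ℕ) ≤ p := by omega
  push_cast [Nat.cast_sub h1]
  rw [ZMod.natCast_self]
  ring

lemma val_neg_one' (hp5 : 5 ≤ p) : (-1 : ZMod p).val = p - 1 := by
  rw [neg_one_eq_cast p hp5, ZMod.val_cast_of_lt (by omega)]

lemma val_cond (hp5 : 5 ≤ p) (δ : (ZMod p)ˣ) :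
    ((δ : ZMod p)).val ≤ p - 2 ↔ (δ : ZMod p) ≠ -1 := by
  have hlt : ((δ : ZMod p)).val < p := ZMod.val_lt _
  constructor
  · intro h hne
    rw [hne, val_neg_one' p hp5] at h
    omega
  · intro hne
    rcases Nat.lt_or_ge ((δ : ZMod p)).val (p - 1) with h | h
    · omega
    · exfalso
      apply hne
      have hval : ((δ : ZMod p)).val = p - 1 := by omega
      have := ZMod.natCast_val (n := p) (R := ZMod p) (δ : ZMod p)
      rw [ZMod.cast_id] at this
      rw [← this, hval, ← neg_one_eq_cast p hp5]

lemma sum_Ico_eight (hp5 : 5 ≤ p) :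
    (8 : ZMod p) * ∑ a ∈ Finset.Ico ((p + 1) / 2) p, (a : ZMod p) = 1 := by
  have hp : p.Prime := Fact.out
  have hodd : p % 2 = 1 := Nat.odd_iff.mp (hp.odd_of_ne_two (by omega))
  set m := (p + 1) / 2 with hm
  have h2m : 2 * m = p + 1 := by omega
  have hmp : m ≤ p := by omega
  have hm1 : 1 ≤ m := by omega
  have gauss : ∀ n : ℕ, 1 ≤ n → (∑ a ∈ Finset.range n, (a : ZMod p)) * 2
      = (n : ZMod p) * ((n : ZMod p) - 1) := by
    intro n hn
    have h2 : ((∑ i ∈ Finset.range n, i) * 2 : ℕ) = ((n * (n - 1) : ℕ)) := by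
      rw [Finset.sum_range_id_mul_two]
    calc (∑ a ∈ Finset.range n, (a : ZMod p)) * 2
        = (((∑ i ∈ Finset.range n, i) * 2 : ℕ) : ZMod p) := by push_cast; ring
      _ = ((n * (n - 1) : ℕ) : ZMod p) := by rw [h2]
      _ = (n : ZMod p) * ((n : ZMod p) - 1) := by push_cast [Nat.cast_sub hn]; ring
  have e1 := gauss p (by omega)
  rw [ZMod.natCast_self] at e1
  ring_nf at e1
  have e2 := gauss m hm1
  have e3 : ∑ a ∈ Finset.Ico m p, (a : ZMod p)
      = ∑ a ∈ Finset.range p, (a : ZMod p) - ∑ a ∈ Finset.range m, (a : ZMod p) :=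
    Finset.sum_Ico_eq_sub _ hmp
  have e4 : (m : ZMod p) * 2 = 1 := by
    have h5 : ((2 * m : ℕ) : ZMod p) = ((p + 1 : ℕ) : ZMod p) := by rw [h2m]
    push_cast [ZMod.natCast_self] at h5
    linear_combination h5
  linear_combination 8 * e3 + 4 * e1 - 4 * e2 - (2 * (m : ZMod p) - 1) * e4

lemma intToRat_sum (c : (ZMod p)ˣ → ℤ) :
    intToRatGroupRing p (∑ δ : (ZMod p)ˣ, MonoidAlgebra.single δ⁻¹ (c δ))
      = ∑ δ : (ZMod p)ˣ, MonoidAlgebra.single δ⁻¹ ((c δ : ℚ)) := by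
  have h : intToRatGroupRing p
      = ⇑(MonoidAlgebra.coeffAddEquiv.symm.toAddMonoidHom.comp
          ((Finsupp.mapRange.addMonoidHom (Int.castAddHom ℚ) :
          ((ZMod p)ˣ →₀ ℤ) →+ ((ZMod p)ˣ →₀ ℚ)).comp MonoidAlgebra.coeffAddEquiv.toAddMonoidHom)) := rfl
  rw [h, map_sum]
  refine Finset.sum_congr rfl fun δ _ => ?_
  exact congrArg MonoidAlgebra.ofCoeff (Finsupp.mapRange_single (hf := map_zero _))

lemma intToRat_single (g : (ZMod p)ˣ) (n : ℤ) :
    intToRatGroupRing p (MonoidAlgebra.single g n) = MonoidAlgebra.single g (n : ℚ) :=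
  congrArg MonoidAlgebra.ofCoeff Finsupp.mapRange_single

lemma omegaInvEval_sum (ω : (ZMod p)ˣ →* ℤ_[p]ˣ) (c : (ZMod p)ˣ → ℤ) :
    omegaInvEval p ω (∑ δ : (ZMod p)ˣ, MonoidAlgebra.single δ⁻¹ (c δ))
      = ∑ δ : (ZMod p)ˣ, (c δ : ℤ_[p]) * ((ω δ : ℤ_[p])) := by
  rw [omegaInvEval, map_sum]
  refine Finset.sum_congr rfl fun δ _ => ?_
  rw [MonoidAlgebra.lift_single]
  simp [invMonoidHom_apply, zsmul_eq_mul]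

lemma memSI_z0 (hp5 : 5 ≤ p) :
    memStickelbergerIdeal p (∑ δ : (ZMod p)ˣ, MonoidAlgebra.single δ⁻¹
      (if ((δ : ZMod p)).val ≤ p - 2 then (((δ : ZMod p)).val : ℤ) else 0)) := by
  have hp0 : (p : ℚ) ≠ 0 := by
    exact_mod_cast (Fact.out : p.Prime).ne_zero
  refine ⟨MonoidAlgebra.single 1 (p : ℤ), ?_⟩
  rw [intToRat_sum, intToRat_single, stickelbergerElt, smul_mul_assoc, Finset.sum_mul,
    Finset.smul_sum]
  refine Finset.sum_congr rfl fun δ _ => ?_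
  rw [smul_mul_assoc, MonoidAlgebra.single_mul_single, mul_one, one_mul,
    MonoidAlgebra.smul_single, MonoidAlgebra.smul_single]
  congr 1
  split_ifs with h
  · push_cast [smul_eq_mul]
    field_simp
  · simp

end Stmt14Aux

namespace Stmt14Aux

lemma not_p_dvd_12 (hp5 : 5 ≤ p) : ¬ p ∣ 12 := by
  intro h
  have hp : p.Prime := Fact.out
  rcases (Nat.Prime.dvd_mul hp).mp (show p ∣ 4 * 3 from h) with h4 | h3
  · rcases (Nat.Prime.dvd_mul hp).mp (show p ∣ 2 * 2 from h4) with h2 | h2 <;>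
      exact absurd (Nat.le_of_dvd (by norm_num) h2) (by omega)
  · exact absurd (Nat.le_of_dvd (by norm_num) h3) (by omega)

end Stmt14Aux

/-- Let `p ≥ 5` be prime, `ω` the Teichmüller character of
`Δ = (ℤ/pℤ)ˣ`, `θ` the Stickelberger element and `𝒥 = ℤΔ ∩ θ·ℤΔ` the Stickelberger
ideal. Then `ω⁻¹(𝒥_p) = B_{1,ω}·ℤ_p` where `𝒥_p` is the `p`-completion of `𝒥`
(the `ℤ_p`-ideal generated by `ω⁻¹(𝒥)`), and `B_{1,ω} ≡ 1/12 (mod p)`;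
in particular `ω⁻¹(𝒥_p) = ℤ_p`. -/
theorem stmt_14 (hp5 : 5 ≤ p)
    (ω : (ZMod p)ˣ →* ℤ_[p]ˣ)
    (hω : ∀ a : (ZMod p)ˣ, PadicInt.toZMod ((ω a : ℤ_[p])) = (a : ZMod p)) :
    ∃ B1ω : ℤ_[p],
      (p : ℤ_[p]) * B1ω
          = ∑ δ : (ZMod p)ˣ, (((δ : ZMod p)).val : ℤ_[p]) * ((ω δ : ℤ_[p])) ∧
      Ideal.span {t : ℤ_[p] | ∃ z : MonoidAlgebra ℤ (ZMod p)ˣ,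
          memStickelbergerIdeal p z ∧ omegaInvEval p ω z = t} = Ideal.span {B1ω} ∧
      (∃ u : ℤ_[p], (12 : ℤ_[p]) * u = 1 ∧ B1ω - u ∈ Ideal.span {(p : ℤ_[p])}) ∧
      Ideal.span {t : ℤ_[p] | ∃ z : MonoidAlgebra ℤ (ZMod p)ˣ,
          memStickelbergerIdeal p z ∧ omegaInvEval p ω z = t} = ⊤ := by
  classical
  have hp : p.Prime := Fact.out
  have hp0 : (p : ℤ_[p]) ≠ 0 := Nat.cast_ne_zero.mpr hp.ne_zero
  have hodd : p % 2 = 1 := Nat.odd_iff.mp (hp.odd_of_ne_two (by omega))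
  have hnd2 : ¬ (p - 1) ∣ 2 := fun h => by
    have := Nat.le_of_dvd (by norm_num) h; omega
  have hndp1 : ¬ (p - 1) ∣ (p + 1) := by
    intro h
    have h2 := Nat.dvd_sub h (dvd_refl (p - 1))
    rw [show p + 1 - (p - 1) = 2 by omega] at h2
    exact hnd2 h2
  have hφv : ∀ δ : (ZMod p)ˣ, PadicInt.toZMod (((δ : ZMod p)).val : ℤ_[p]) = (δ : ZMod p) := by
    intro δ
    rw [map_natCast, ZMod.natCast_val, ZMod.cast_id]
  have hωpow : ∀ δ : (ZMod p)ˣ, ((ω δ : ℤ_[p])) ^ p = ((ω δ : ℤ_[p])) := by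
    intro δ
    have h2 : (ω δ) ^ (p - 1) = 1 := by
      rw [← map_pow, ZMod.units_pow_card_sub_one_eq_one p δ, map_one]
    have h1 : (ω δ) ^ p = ω δ := by
      calc (ω δ) ^ p = (ω δ) ^ (p - 1) * (ω δ) ^ 1 := by rw [← pow_add]; congr 1; omega
        _ = ω δ := by rw [h2, one_mul, pow_one]
    calc ((ω δ : ℤ_[p])) ^ p = ((ω δ ^ p : ℤ_[p]ˣ) : ℤ_[p]) := by
          rw [Units.val_pow_eq_pow_val]
      _ = _ := by rw [h1]
  have hcong : ∀ δ : (ZMod p)ˣ,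
      (p : ℤ_[p]) ^ 2 ∣ ((ω δ : ℤ_[p])) - (((δ : ZMod p)).val : ℤ_[p]) ^ p := by
    intro δ
    have h1 : (p : ℤ_[p]) ∣ ((ω δ : ℤ_[p])) - (((δ : ZMod p)).val : ℤ_[p]) := by
      rw [← Stmt14Aux.toZMod_zero_iff, map_sub, hω δ, hφv δ, sub_self]
    have h2 := dvd_sub_pow_of_dvd_sub h1 1
    rw [show p ^ 1 = p from pow_one p, show (1 : ℕ) + 1 = 2 from rfl, hωpow δ] at h2
    exact h2
  set T := ∑ δ : (ZMod p)ˣ, (((δ : ZMod p)).val : ℤ_[p]) ^ (p + 1) with hTdef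
  have hST : (p : ℤ_[p]) ^ 2 ∣
      (∑ δ : (ZMod p)ˣ, (((δ : ZMod p)).val : ℤ_[p]) * ((ω δ : ℤ_[p]))) - T := by
    rw [hTdef, ← Finset.sum_sub_distrib]
    refine Finset.dvd_sum fun δ _ => ?_
    have h3 : (((δ : ZMod p)).val : ℤ_[p]) * ((ω δ : ℤ_[p]))
        - (((δ : ZMod p)).val : ℤ_[p]) ^ (p + 1)
        = (((δ : ZMod p)).val : ℤ_[p]) *
            (((ω δ : ℤ_[p])) - (((δ : ZMod p)).val : ℤ_[p]) ^ p) := by ring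
    rw [h3]
    exact (hcong δ).mul_left _
  have hcop : Nat.Coprime 2 p := Nat.Coprime.symm
    ((Nat.Prime.coprime_iff_not_dvd hp).mpr
      (fun h => by have := Nat.le_of_dvd (by norm_num) h; omega))
  set u2 : (ZMod p)ˣ := ZMod.unitOfCoprime 2 hcop with hu2
  have hu2coe : ((u2 : ZMod p)) = (2 : ZMod p) := by
    rw [hu2, ZMod.coe_unitOfCoprime]; norm_num
  have hval2 : ∀ δ : (ZMod p)ˣ,
      ((((u2 * δ : (ZMod p)ˣ) : ZMod p)).val : ℤ_[p])
        = 2 * (((δ : ZMod p)).val : ℤ_[p]) - (p : ℤ_[p]) *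
            (if p ≤ 2 * ((δ : ZMod p)).val then (1 : ℤ_[p]) else 0) := by
    intro δ
    have hlt : ((δ : ZMod p)).val < p := ZMod.val_lt _
    have hv : (((u2 * δ : (ZMod p)ˣ) : ZMod p)).val = (2 * ((δ : ZMod p)).val) % p := by
      rw [Units.val_mul, hu2coe, ZMod.val_mul]
      congr 1
      congr 1
      rw [show ((2 : ZMod p)) = ((2 : ℕ) : ZMod p) by norm_num, ZMod.val_natCast]
      exact Nat.mod_eq_of_lt (by omega)
    by_cases hcase : p ≤ 2 * ((δ : ZMod p)).val
    · rw [hv, Nat.mod_eq_sub_mod hcase, Nat.mod_eq_of_lt (by omega), if_pos hcase]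
      push_cast [Nat.cast_sub hcase]
      ring
    · rw [hv, Nat.mod_eq_of_lt (by omega), if_neg hcase]
      push_cast
      ring
  choose c hc using fun δ : (ZMod p)ˣ =>
    Stmt14Aux.pow_expand (2 * (((δ : ZMod p)).val : ℤ_[p]))
      (-((p : ℤ_[p]) * (if p ≤ 2 * ((δ : ZMod p)).val then (1 : ℤ_[p]) else 0))) p
  set W := ∑ δ : (ZMod p)ˣ, ((p : ℤ_[p]) + 1) * (2 * (((δ : ZMod p)).val : ℤ_[p])) ^ p *
      (if p ≤ 2 * ((δ : ZMod p)).val then (1 : ℤ_[p]) else 0) with hWdef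
  have h0 : ∑ δ : (ZMod p)ˣ, ((((u2 * δ : (ZMod p)ˣ) : ZMod p)).val : ℤ_[p]) ^ (p + 1) = T := by
    rw [hTdef]
    have := Equiv.sum_comp (Equiv.mulLeft u2)
      (fun δ : (ZMod p)ˣ => (((δ : ZMod p)).val : ℤ_[p]) ^ (p + 1))
    simpa using this
  have h1 : ∑ δ : (ZMod p)ˣ, ((((u2 * δ : (ZMod p)ˣ) : ZMod p)).val : ℤ_[p]) ^ (p + 1)
      = ∑ δ : (ZMod p)ˣ,
        ((2 * (((δ : ZMod p)).val : ℤ_[p])) ^ (p + 1)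
          + ((p : ℤ_[p]) + 1) * (2 * (((δ : ZMod p)).val : ℤ_[p])) ^ p *
              (-((p : ℤ_[p]) * (if p ≤ 2 * ((δ : ZMod p)).val then (1 : ℤ_[p]) else 0)))
          + (-((p : ℤ_[p]) * (if p ≤ 2 * ((δ : ZMod p)).val then (1 : ℤ_[p]) else 0))) ^ 2
              * c δ) :=
    Finset.sum_congr rfl fun δ _ => by rw [hval2 δ, sub_eq_add_neg, hc δ]
  have h2 : ∑ δ : (ZMod p)ˣ,
        ((2 * (((δ : ZMod p)).val : ℤ_[p])) ^ (p + 1)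
          + ((p : ℤ_[p]) + 1) * (2 * (((δ : ZMod p)).val : ℤ_[p])) ^ p *
              (-((p : ℤ_[p]) * (if p ≤ 2 * ((δ : ZMod p)).val then (1 : ℤ_[p]) else 0)))
          + (-((p : ℤ_[p]) * (if p ≤ 2 * ((δ : ZMod p)).val then (1 : ℤ_[p]) else 0))) ^ 2
              * c δ)
      = 2 ^ (p + 1) * T - (p : ℤ_[p]) * W + (p : ℤ_[p]) ^ 2 *
          ∑ δ : (ZMod p)ˣ, (if p ≤ 2 * ((δ : ZMod p)).val then (1 : ℤ_[p]) else 0) ^ 2 * c δ := by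
    rw [hTdef, hWdef, Finset.mul_sum, Finset.mul_sum, Finset.mul_sum,
      ← Finset.sum_sub_distrib, ← Finset.sum_add_distrib]
    exact Finset.sum_congr rfl fun δ _ => by ring
  have E := h0.symm.trans (h1.trans h2)
  have hkey : (p : ℤ_[p]) ^ 2 ∣ (2 ^ (p + 1) - 1) * T - (p : ℤ_[p]) * W :=
    ⟨-∑ δ : (ZMod p)ˣ, (if p ≤ 2 * ((δ : ZMod p)).val then (1 : ℤ_[p]) else 0) ^ 2 * c δ,
      by linear_combination -E⟩
  have hφT : PadicInt.toZMod T = 0 := by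
    rw [hTdef, map_sum]
    rw [show (∑ δ : (ZMod p)ˣ, PadicInt.toZMod ((((δ : ZMod p)).val : ℤ_[p]) ^ (p + 1)))
        = ∑ δ : (ZMod p)ˣ, ((δ : ZMod p)) ^ (p + 1) from
      Finset.sum_congr rfl fun δ _ => by rw [map_pow, hφv δ]]
    exact Stmt14Aux.sum_units_pow p (p + 1) hndp1
  obtain ⟨t, ht⟩ := (Stmt14Aux.toZMod_zero_iff p T).mp hφT
  have hAtW : (p : ℤ_[p]) ∣ (2 ^ (p + 1) - 1) * t - W := by
    obtain ⟨k, hk⟩ := hkey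
    refine ⟨k, ?_⟩
    apply mul_left_cancel₀ hp0
    linear_combination hk - (2 ^ (p + 1) - 1) * ht
  have hφA : PadicInt.toZMod ((2 : ℤ_[p]) ^ (p + 1) - 1) = 3 := by
    rw [map_sub, map_pow, map_one, map_ofNat, pow_succ, ZMod.pow_card]
    norm_num
  have hφW : PadicInt.toZMod W
      = ∑ a ∈ Finset.Ico 1 p, (if p ≤ 2 * a then 2 * ((a : ℕ) : ZMod p) else 0) := by
    rw [hWdef, map_sum, ← Stmt14Aux.sum_units_val p
      (fun a : ℕ => if p ≤ 2 * a then 2 * ((a : ℕ) : ZMod p) else 0)]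
    refine Finset.sum_congr rfl fun δ _ => ?_
    rw [map_mul, map_mul, map_add, map_natCast, map_one, ZMod.natCast_self, map_pow,
      map_mul, map_ofNat, map_natCast, apply_ite PadicInt.toZMod, map_one, map_zero]
    split_ifs with h
    · rw [ZMod.pow_card]; ring
    · ring
  have hIco : ∑ a ∈ Finset.Ico 1 p, (if p ≤ 2 * a then 2 * ((a : ℕ) : ZMod p) else 0)
      = 2 * ∑ a ∈ Finset.Ico ((p + 1) / 2) p, (a : ZMod p) := by
    rw [← Finset.sum_Ico_consecutive _
      (show 1 ≤ (p + 1) / 2 by omega) (show (p + 1) / 2 ≤ p by omega)]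
    have hz : ∑ a ∈ Finset.Ico 1 ((p + 1) / 2),
        (if p ≤ 2 * a then 2 * ((a : ℕ) : ZMod p) else 0) = 0 :=
      Finset.sum_eq_zero fun a ha => by
        rw [Finset.mem_Ico] at ha; exact if_neg (by omega)
    rw [hz, zero_add, Finset.mul_sum]
    exact Finset.sum_congr rfl fun a ha => by
      rw [Finset.mem_Ico] at (ha : a ∈ Finset.Ico ((p+1)/2) p)
      exact if_pos (by omega)
  have h8 := Stmt14Aux.sum_Ico_eight p hp5
  have hφAtW : 3 * PadicInt.toZMod t - PadicInt.toZMod W = 0 := by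
    have h9 := (Stmt14Aux.toZMod_zero_iff p _).mpr hAtW
    rw [map_sub, map_mul, hφA] at h9
    linear_combination h9
  have h12t : (12 : ZMod p) * PadicInt.toZMod t = 1 := by
    rw [hφW, hIco] at hφAtW
    linear_combination 4 * hφAtW + h8
  have hpt : (p : ℤ_[p]) ∣ 12 * t - 1 := by
    rw [← Stmt14Aux.toZMod_zero_iff, map_sub, map_mul, map_one, map_ofNat]
    linear_combination h12t
  obtain ⟨d, hd⟩ := hST
  have hB1unit : IsUnit (t + (p : ℤ_[p]) * d) := by
    apply Stmt14Aux.isUnit_of_toZMod_ne_zero p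
    rw [map_add, map_mul, map_natCast, ZMod.natCast_self, zero_mul, add_zero]
    intro h0'
    rw [h0', mul_zero] at h12t
    exact zero_ne_one h12t
  -- the unit element z₀ of the Stickelberger ideal
  have hmem := Stmt14Aux.memSI_z0 p hp5
  have ht0eval := Stmt14Aux.omegaInvEval_sum p ω
    (fun δ : (ZMod p)ˣ => if ((δ : ZMod p)).val ≤ p - 2 then (((δ : ZMod p)).val : ℤ) else 0)
  have hφt0 : PadicInt.toZMod (∑ δ : (ZMod p)ˣ,
      (((if ((δ : ZMod p)).val ≤ p - 2 then (((δ : ZMod p)).val : ℤ) else 0) : ℤ) : ℤ_[p])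
        * ((ω δ : ℤ_[p]))) = -1 := by
    rw [map_sum]
    have hterm : ∀ δ : (ZMod p)ˣ, PadicInt.toZMod
        ((((if ((δ : ZMod p)).val ≤ p - 2 then (((δ : ZMod p)).val : ℤ) else 0) : ℤ) : ℤ_[p])
          * ((ω δ : ℤ_[p])))
        = ((δ : ZMod p)) ^ 2 - (if δ = (-1 : (ZMod p)ˣ) then ((δ : ZMod p)) ^ 2 else 0) := by
      intro δ
      rw [map_mul, map_intCast, hω δ]
      by_cases hδ : (δ : ZMod p) = -1
      · have hv : ¬ ((δ : ZMod p)).val ≤ p - 2 := by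
          rw [Stmt14Aux.val_cond p hp5]
          simpa using hδ
        rw [if_neg hv, if_pos (Units.ext (by rw [hδ]; simp))]
        simp
      · have hv : ((δ : ZMod p)).val ≤ p - 2 := (Stmt14Aux.val_cond p hp5 δ).mpr hδ
        rw [if_pos hv, if_neg (fun h => hδ (by rw [h]; simp))]
        push_cast [ZMod.natCast_val, ZMod.cast_id]
        ring
    rw [Finset.sum_congr rfl fun δ _ => hterm δ, Finset.sum_sub_distrib,
      Stmt14Aux.sum_units_pow p 2 hnd2,
      Finset.sum_ite_eq' Finset.univ (-1 : (ZMod p)ˣ)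
        (fun δ : (ZMod p)ˣ => ((δ : ZMod p)) ^ 2),
      if_pos (Finset.mem_univ _)]
    simp
  have ht0unit : IsUnit (omegaInvEval p ω (∑ δ : (ZMod p)ˣ, MonoidAlgebra.single δ⁻¹
      (if ((δ : ZMod p)).val ≤ p - 2 then (((δ : ZMod p)).val : ℤ) else 0))) := by
    rw [ht0eval]
    apply Stmt14Aux.isUnit_of_toZMod_ne_zero p
    rw [hφt0]
    exact neg_ne_zero.mpr one_ne_zero
  have htop : Ideal.span {t : ℤ_[p] | ∃ z : MonoidAlgebra ℤ (ZMod p)ˣ,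
      memStickelbergerIdeal p z ∧ omegaInvEval p ω z = t} = ⊤ := by
    refine Ideal.eq_top_of_isUnit_mem _ (Ideal.subset_span ?_) ht0unit
    exact ⟨_, hmem, rfl⟩
  have h12u : IsUnit (12 : ℤ_[p]) := by
    apply Stmt14Aux.isUnit_of_toZMod_ne_zero p
    rw [map_ofNat]
    intro h
    rw [show ((12 : ZMod p)) = ((12 : ℕ) : ZMod p) by norm_num,
      ZMod.natCast_eq_zero_iff] at h
    exact Stmt14Aux.not_p_dvd_12 p hp5 h
  obtain ⟨U, hU⟩ := h12u
  refine ⟨t + (p : ℤ_[p]) * d, ?_, ?_, ?_, htop⟩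
  · linear_combination -ht - hd
  · rw [htop]
    exact (Ideal.span_singleton_eq_top.mpr hB1unit).symm
  · refine ⟨(U⁻¹ : ℤ_[p]ˣ), ?_, ?_⟩
    · rw [← hU]; exact_mod_cast U.mul_inv
    · rw [Ideal.mem_span_singleton]
      have hUU : (12 : ℤ_[p]) * ((U⁻¹ : ℤ_[p]ˣ) : ℤ_[p]) = 1 := by
        rw [← hU]; exact_mod_cast U.mul_inv
      have h1 : (p : ℤ_[p]) ∣ 12 * (t + (p : ℤ_[p]) * d) - 1 := by
        obtain ⟨k, hk⟩ := hpt
        exact ⟨k + 12 * d, by linear_combination hk⟩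
      obtain ⟨k2, hk2⟩ := h1
      exact ⟨((U⁻¹ : ℤ_[p]ˣ) : ℤ_[p]) * k2,
        by linear_combination ((U⁻¹ : ℤ_[p]ˣ) : ℤ_[p]) * hk2
          - (t + (p : ℤ_[p]) * d) * hUU⟩



end
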